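/- arXiv:0909.0326 — 9 statements merged into one kernel-verified Lean document; each statement's English description precedes it below -/
import Mathlib

section
/- Every Hom-alternative algebra is Hom-flexible, i.e., as_α(x,y,x) = 0 for all x, y, equivalently μ(α(x), μ(y,x)) = μ(μ(x,y), α(x)). -/
/-- Every Hom-alternative algebra is Hom-flexible. -/
theorem hom_alternative_is_hom_flexible
    {K V : Type*} [Field K] [CharZero K] [AddCommGroup V] [Module K V]
    (μ : V →ₗ[K] V →ₗ[K] V) (α : V →ₗ[K] V)
    (hl : ∀ x y : V, μ (α x) (μ x y) = μ (μ x x) (α y))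
    (hr : ∀ x y : V, μ (α x) (μ y y) = μ (μ x y) (α y)) :
    ∀ x y : V,
      μ (α x) (μ y x) - μ (μ x y) (α x) = 0 ∧ μ (α x) (μ y x) = μ (μ x y) (α x) := by
  intro x y
  have h := hr x (x + y)
  simp only [map_add, LinearMap.add_apply] at h
  have key : μ (α x) (μ y x) = μ (μ x y) (α x) := by
    linear_combination (norm := module) h - hl x y - hr x y - hr x x
  exact ⟨sub_eq_zero_of_eq key, key⟩
end

section
/- The Hom-associator of a Hom-alternative algebra is an alternating function of its three arguments: for every permutation σ of {1,2,3}, as_α(x_{σ(1)}, x_{σ(2)}, x_{σ(3)}) = sign(σ) · as_α(x_1, x_2, x_3). -/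
/-- The Hom-associator of a Hom-alternative algebra is an alternating function
of its three arguments. -/
theorem hom_associator_alternating
    {K V : Type*} [Field K] [CharZero K] [AddCommGroup V] [Module K V]
    (μ : V →ₗ[K] V →ₗ[K] V) (α : V →ₗ[K] V)
    (hl : ∀ x y : V, μ (α x) (μ x y) = μ (μ x x) (α y))
    (hr : ∀ x y : V, μ (α x) (μ y y) = μ (μ x y) (α y)) :
    ∀ (σ : Equiv.Perm (Fin 3)) (x : Fin 3 → V),
      μ (α (x (σ 0))) (μ (x (σ 1)) (x (σ 2))) - μ (μ (x (σ 0)) (x (σ 1))) (α (x (σ 2)))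
      = (Equiv.Perm.sign σ : ℤ) •
        (μ (α (x 0)) (μ (x 1) (x 2)) - μ (μ (x 0) (x 1)) (α (x 2))) := by
  have s1 : ∀ a b c : V, μ (α b) (μ a c) - μ (μ b a) (α c)
      = -(μ (α a) (μ b c) - μ (μ a b) (α c)) := by
    intro a b c
    have key := hl (a + b) c
    simp only [map_add, LinearMap.add_apply] at key
    linear_combination (norm := abel) key - hl a c - hl b c
  have s2 : ∀ a b c : V, μ (α a) (μ c b) - μ (μ a c) (α b)
      = -(μ (α a) (μ b c) - μ (μ a b) (α c)) := by
    intro a b c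
    have key := hr a (b + c)
    simp only [map_add, LinearMap.add_apply] at key
    linear_combination (norm := abel) key - hr a b - hr a c
  intro σ x
  have hall : ∀ τ : Equiv.Perm (Fin 3), τ = 1 ∨ τ = Equiv.swap (0:Fin 3) 1 ∨ τ = Equiv.swap (0:Fin 3) 2 ∨ τ = Equiv.swap (1:Fin 3) 2 ∨
      τ = Equiv.swap (0:Fin 3) 1 * Equiv.swap 1 2 ∨ τ = Equiv.swap (0:Fin 3) 2 * Equiv.swap 1 2 := by
    decide
  set a := x 0; set b := x 1; set c := x 2
  rcases hall σ with h|h|h|h|h|h <;> subst h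
  · simp; rfl
  · have e0 : (Equiv.swap (0:Fin 3) 1) 0 = 1 := rfl
    have e1 : (Equiv.swap (0:Fin 3) 1) 1 = 0 := rfl
    have e2 : (Equiv.swap (0:Fin 3) 1) 2 = 2 := rfl
    rw [e0, e1, e2, s1 a b c, Equiv.Perm.sign_swap (by decide)]
    simp
  · have e0 : (Equiv.swap (0:Fin 3) 2) 0 = 2 := rfl
    have e1 : (Equiv.swap (0:Fin 3) 2) 1 = 1 := rfl
    have e2 : (Equiv.swap (0:Fin 3) 2) 2 = 0 := rfl
    rw [e0, e1, e2, s1 b c a, s2 b a c, s1 a b c, Equiv.Perm.sign_swap (by decide)]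
    simp
  · have e0 : (Equiv.swap (1:Fin 3) 2) 0 = 0 := rfl
    have e1 : (Equiv.swap (1:Fin 3) 2) 1 = 2 := rfl
    have e2 : (Equiv.swap (1:Fin 3) 2) 2 = 1 := rfl
    rw [e0, e1, e2, s2 a b c, Equiv.Perm.sign_swap (by decide)]
    simp
  · have e0 : ((Equiv.swap 0 1 * Equiv.swap 1 2 : Equiv.Perm (Fin 3))) 0 = 1 := rfl
    have e1 : ((Equiv.swap 0 1 * Equiv.swap 1 2 : Equiv.Perm (Fin 3))) 1 = 2 := rfl
    have e2 : ((Equiv.swap 0 1 * Equiv.swap 1 2 : Equiv.Perm (Fin 3))) 2 = 0 := rfl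
    rw [e0, e1, e2, s2 b a c, s1 a b c]
    have : Equiv.Perm.sign ((Equiv.swap 0 1 * Equiv.swap 1 2 : Equiv.Perm (Fin 3))) = 1 := by decide
    rw [this]
    simp
  · have e0 : ((Equiv.swap 0 2 * Equiv.swap 1 2 : Equiv.Perm (Fin 3))) 0 = 2 := rfl
    have e1 : ((Equiv.swap 0 2 * Equiv.swap 1 2 : Equiv.Perm (Fin 3))) 1 = 0 := rfl
    have e2 : ((Equiv.swap 0 2 * Equiv.swap 1 2 : Equiv.Perm (Fin 3))) 2 = 1 := rfl
    rw [e0, e1, e2, s1 a c b, s2 a b c]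
    have : Equiv.Perm.sign ((Equiv.swap 0 2 * Equiv.swap 1 2 : Equiv.Perm (Fin 3))) = 1 := by decide
    rw [this]
    simp
end

section
/- In a Hom-alternative algebra, if x and y anticommute (μ(x,y) = −μ(y,x)), then μ(α(x), μ(y,z)) = −μ(α(y), μ(x,z)) for all z. -/
/-- In a Hom-alternative algebra, anticommuting elements satisfy
μ(α(x), μ(y,z)) = −μ(α(y), μ(x,z)). -/
theorem hom_alternative_anticommute_left
    {K V : Type*} [Field K] [CharZero K] [AddCommGroup V] [Module K V]
    (μ : V →ₗ[K] V →ₗ[K] V) (α : V →ₗ[K] V)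
    (hl : ∀ x y : V, μ (α x) (μ x y) = μ (μ x x) (α y))
    (hr : ∀ x y : V, μ (α x) (μ y y) = μ (μ x y) (α y))
    (x y : V) (hxy : μ x y = -μ y x) :
    ∀ z : V, μ (α x) (μ y z) = -μ (α y) (μ x z) := by
  intro z
  have h := hl (x + y) z
  simp only [map_add, map_neg, LinearMap.add_apply, LinearMap.neg_apply, hxy] at h
  rw [hl x z, hl y z] at h
  linear_combination (norm := abel) h
end

section
/- In a Hom-alternative algebra, if x and y anticommute (μ(x,y) = −μ(y,x)), then μ(μ(z,x), α(y)) = −μ(μ(z,y), α(x)) for all z. -/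
/-- In a Hom-alternative algebra, anticommuting elements satisfy
μ(μ(z,x), α(y)) = −μ(μ(z,y), α(x)). -/
theorem hom_alternative_anticommute_right
    {K V : Type*} [Field K] [CharZero K] [AddCommGroup V] [Module K V]
    (μ : V →ₗ[K] V →ₗ[K] V) (α : V →ₗ[K] V)
    (hl : ∀ x y : V, μ (α x) (μ x y) = μ (μ x x) (α y))
    (hr : ∀ x y : V, μ (α x) (μ y y) = μ (μ x y) (α y))
    (x y : V) (hxy : μ x y = -μ y x) :
    ∀ z : V, μ (μ z x) (α y) = -μ (μ z y) (α x) := by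
  intro z
  have key := hr z (x + y)
  have h1 := hr z x
  have h2 := hr z y
  simp only [map_add, LinearMap.add_apply, hxy, map_neg] at key
  rw [← h1, ← h2] at key
  rw [eq_neg_iff_add_eq_zero]
  linear_combination (norm := abel) -key
end

section
/- Let (V, μ) be a left alternative algebra (μ(x, μ(x,y)) = μ(μ(x,x), y)) and α: V → V an algebra endomorphism (α linear with α(μ(x,y)) = μ(α(x), α(y))). Then (V, μ_α, α), where μ_α = α ∘ μ, is a left Hom-alternative algebra: μ_α(α(x), μ_α(x,y)) = μ_α(μ_α(x,x), α(y)). -/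
/-- Twisting a left alternative algebra by an endomorphism yields a left
Hom-alternative algebra. -/
theorem twist_left_alternative
    {K V : Type*} [Field K] [CharZero K] [AddCommGroup V] [Module K V]
    (μ : V →ₗ[K] V →ₗ[K] V) (α : V →ₗ[K] V)
    (hα : ∀ x y : V, α (μ x y) = μ (α x) (α y))
    (hl : ∀ x y : V, μ x (μ x y) = μ (μ x x) y) :
    ∀ x y : V, α (μ (α x) (α (μ x y))) = α (μ (α (μ x x)) (α y)) := by
  intro x y
  rw [← hα, ← hα, hl, hα, hα]
end

section
/- Let (V, μ) be a right alternative algebra (μ(μ(x,y), y) = μ(x, μ(y,y))) and α: V → V an algebra endomorphism. Then (V, μ_α, α), where μ_α = α ∘ μ, is a right Hom-alternative algebra: μ_α(α(x), μ_α(y,y)) = μ_α(μ_α(x,y), α(y)). -/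
/-- Twisting a right alternative algebra by an endomorphism yields a right
Hom-alternative algebra. -/
theorem twist_right_alternative
    {K V : Type*} [Field K] [CharZero K] [AddCommGroup V] [Module K V]
    (μ : V →ₗ[K] V →ₗ[K] V) (α : V →ₗ[K] V)
    (hα : ∀ x y : V, α (μ x y) = μ (α x) (α y))
    (hr : ∀ x y : V, μ (μ x y) y = μ x (μ y y)) :
    ∀ x y : V, α (μ (α x) (α (μ y y))) = α (μ (α (μ x y)) (α y)) := by
  intro x y
  simp only [← hα, hr]
end

section
/- Let (V, m, α) be a Hom-associative algebra: m(α(x), m(y,z)) = m(m(x,y), α(z)). Define μ(x,y) = (1/2)(m(x,y) + m(y,x)). Then (V, μ, α) is a Hom-Jordan algebra: μ is commutative and μ(α²(x), μ(y, μ(x,x))) = μ(μ(α(x), y), α(μ(x,x))) for all x, y. -/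
/-- Polarization of a Hom-associative algebra is a Hom-Jordan algebra. -/
theorem hom_associative_polarization_hom_jordan
    {K V : Type*} [Field K] [CharZero K] [AddCommGroup V] [Module K V]
    (m : V →ₗ[K] V →ₗ[K] V) (α : V →ₗ[K] V)
    (hα : ∀ x y : V, α (m x y) = m (α x) (α y))
    (hassoc : ∀ x y z : V, m (α x) (m y z) = m (m x y) (α z))
    (μ : V → V → V)
    (hμ : ∀ x y : V, μ x y = (1/2 : K) • (m x y + m y x)) :
    (∀ x y : V, μ x y = μ y x) ∧
    (∀ x y : V, μ (α (α x)) (μ y (μ x x)) = μ (μ (α x) y) (α (μ x x))) := by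
  constructor
  · intro x y; rw [hμ, hμ, add_comm]
  · intro x y
    have h0 : m (α x) (m x x) = m (m x x) (α x) := hassoc x x x
    have e1 : m (α (α x)) (m y (m x x)) = m (m (α x) y) (α (m x x)) := hassoc (α x) y (m x x)
    have e2 : m (α (α x)) (m (m x x) y) = m (m (m x x) (α x)) (α y) := by
      rw [hassoc (α x) (m x x) y, h0]
    have e3 : m (m y (m x x)) (α (α x)) = m (α y) (m (m x x) (α x)) := (hassoc y (m x x) (α x)).symm
    have e4 : m (m (m x x) y) (α (α x)) = m (α (m x x)) (m y (α x)) := (hassoc (m x x) y (α x)).symm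
    have r2 : m (m y (α x)) (α (m x x)) = m (α y) (m (α x) (m x x)) := (hassoc y (α x) (m x x)).symm
    have r3 : m (α (m x x)) (m (α x) y) = m (m (m x x) (α x)) (α y) := hassoc (m x x) (α x) y
    simp only [hμ, map_add, map_smul, LinearMap.add_apply, LinearMap.smul_apply, smul_add,
      smul_smul]
    rw [e1, e2, e3, e4, r2, r3, h0]
    module
end

section
/- Let (V, μ) be a Jordan algebra (μ commutative with μ(μ(x,y), μ(x,x)) = μ(x, μ(y, μ(x,x)))) and α: V → V an algebra endomorphism. Then (V, μ_α, α) with μ_α = α ∘ μ is a Hom-Jordan algebra: μ_α is commutative and μ_α(α²(x), μ_α(y, μ_α(x,x))) = μ_α(μ_α(α(x), y), α(μ_α(x,x))). -/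
/-- Twisting a Jordan algebra by an endomorphism yields a Hom-Jordan algebra. -/
theorem twist_jordan
    {K V : Type*} [Field K] [CharZero K] [AddCommGroup V] [Module K V]
    (μ : V →ₗ[K] V →ₗ[K] V) (α : V →ₗ[K] V)
    (hcomm : ∀ x y : V, μ x y = μ y x)
    (hJ : ∀ x y : V, μ (μ x y) (μ x x) = μ x (μ y (μ x x)))
    (hα : ∀ x y : V, α (μ x y) = μ (α x) (α y)) :
    (∀ x y : V, α (μ x y) = α (μ y x)) ∧
    (∀ x y : V,
      α (μ (α (α x)) (α (μ y (α (μ x x)))))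
        = α (μ (α (μ (α x) y)) (α (α (μ x x))))) := by
  constructor
  · intro x y; rw [hcomm]
  · intro x y
    simp only [hα]
    rw [hJ]
end

section
/- With the multiplication μ of the previous 3-dimensional Hom-associative example, if a ≠ b and b ≠ 0 then μ is not associative; specifically μ(μ(e₁,e₁), e₃) − μ(e₁, μ(e₁,e₃)) = (a−b)·b·e₃ ≠ 0. -/
/-- The explicit bilinear multiplication of the 3-dimensional example. -/
def exMul {K : Type*} [Field K] (a b : K) (x y : Fin 3 → K) : Fin 3 → K :=
  ![a * (x 0 * y 0),
    a * (x 0 * y 1 + x 1 * y 0 + x 1 * y 1),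
    b * (x 0 * y 2 + x 2 * y 0 + x 1 * y 2)]

/-- The multiplication of the 3-dimensional example is not associative when
a ≠ b and b ≠ 0. -/
theorem example_not_associative {K : Type*} [Field K] [CharZero K] (a b : K)
    (hab : a ≠ b) (hb : b ≠ 0) :
    exMul a b (exMul a b ![1, 0, 0] ![1, 0, 0]) ![0, 0, 1]
      - exMul a b ![1, 0, 0] (exMul a b ![1, 0, 0] ![0, 0, 1])
      = ((a - b) * b) • (![0, 0, 1] : Fin 3 → K) ∧
    ((a - b) * b) • (![0, 0, 1] : Fin 3 → K) ≠ 0 := by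
  constructor
  · funext i
    fin_cases i <;> simp [exMul] <;> ring
  · intro h
    have h2 := congrFun h 2
    simp at h2
    rcases h2 with h2 | h2
    · exact hab (sub_eq_zero.mp h2)
    · exact hb h2
end
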